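/- Let (X,d) be a complete and bounded metric space, let φ : [0,∞) → [0,∞) be a comparison function, and let f : X → X be a φ-contraction. Then f has a unique fixed point x₀, and for every x ∈ X the sequence of iterates f^[n](x) converges to x₀ as n → ∞. -/

import Mathlib

open Filter Topology Set

/-- `φ : [0,∞) → [0,∞)` is a comparison function: it maps `[0,∞)` into `[0,∞)`,
is increasing, satisfies `φ t < t` for `t > 0`, and is right-continuous. -/
def IsComparisonFn (φ : ℝ → ℝ) : Prop :=
  (∀ t : ℝ, 0 ≤ t → 0 ≤ φ t) ∧
  MonotoneOn φ (Set.Ici (0 : ℝ)) ∧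
  (∀ t : ℝ, 0 < t → φ t < t) ∧
  (∀ t : ℝ, 0 ≤ t → ContinuousWithinAt φ (Set.Ici t) t)

/-- `f_{α₁…αₙ} = f_{α₁} ∘ f_{α₂} ∘ … ∘ f_{αₙ}` (the identity for the empty word). -/
def WordMap {X I : Type*} (f : I → X → X) : List I → X → X
  | [] => id
  | i :: w => f i ∘ WordMap f w

/-- `[α]_n`: the finite word consisting of the first `n` letters of the infinite word `α`. -/
def Pref {I : Type*} (α : ℕ → I) (n : ℕ) : List I := List.ofFn (fun k : Fin n => α (k : ℕ))

/-- `X_w = f_w(X)`, the image of the whole space under the word map. -/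
def WordSet {X I : Type*} (f : I → X → X) (w : List I) : Set X := Set.range (WordMap f w)

/-- A family `(f_i)_{i ∈ I}` of self-maps of `X` has attractor if:
(a) for every infinite word `α`, `⋂ₙ X_{[α]ₙ}` has a unique element `a_α`;
(b) whenever `a_α ≠ a_β`, some `X_{[α]_{n₀}}` and `X_{[β]_{n₀}}` are disjoint. -/
def HasAttractor {X I : Type*} (f : I → X → X) : Prop :=
  (∀ α : ℕ → I, ∃! a : X, ∀ n : ℕ, a ∈ WordSet f (Pref α n)) ∧
  (∀ α β : ℕ → I, ∀ a b : X,
    (∀ n : ℕ, a ∈ WordSet f (Pref α n)) → (∀ n : ℕ, b ∈ WordSet f (Pref β n)) →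
    a ≠ b →
    ∃ n₀ : ℕ, WordSet f (Pref α n₀) ∩ WordSet f (Pref β n₀) = ∅)

/-- **Browder's fixed point theorem.** On a complete and bounded metric space,
every `φ`-contraction (with `φ` a comparison function) has a unique fixed point `x₀`,
and all orbits converge to `x₀`. -/
theorem browder_fixed_point {X : Type*} [MetricSpace X] [CompleteSpace X] [Nonempty X]
    (hbdd : ∃ C : ℝ, ∀ x y : X, dist x y ≤ C)
    (φ : ℝ → ℝ) (hφ : IsComparisonFn φ)
    (f : X → X) (hf : ∀ x y : X, dist (f x) (f y) ≤ φ (dist x y)) :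
    ∃ x₀ : X, f x₀ = x₀ ∧ (∀ y : X, f y = y → y = x₀) ∧
      ∀ x : X, Tendsto (fun n : ℕ => f^[n] x) atTop (𝓝 x₀) := by

  obtain ⟨hnn, hmono, hlt, hrc⟩ := hφ
  obtain ⟨C0, hC0⟩ := hbdd
  set C := max C0 0 with hC
  have hCnn : (0:ℝ) ≤ C := le_max_right _ _
  have hCb : ∀ x y : X, dist x y ≤ C := fun x y => (hC0 x y).trans (le_max_left _ _)
  have hφ0 : φ 0 = 0 := by
    refine le_antisymm ?_ (hnn 0 le_rfl)
    by_contra h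
    push_neg at h
    have h1 : φ 0 ≤ φ (φ 0) := hmono (le_refl (0:ℝ)) (le_of_lt h) (le_of_lt h)
    have h2 : φ (φ 0) < φ 0 := hlt _ h
    linarith
  have hle : ∀ t : ℝ, 0 ≤ t → φ t ≤ t := by
    intro t ht
    rcases eq_or_lt_of_le ht with h | h
    · rw [← h, hφ0]
    · exact le_of_lt (hlt t h)
  set a : ℕ → ℝ := fun n => φ^[n] C with ha
  have hannn : ∀ n, 0 ≤ a n := by
    intro n
    induction n with
    | zero => exact hCnn
    | succ n ih =>
      show 0 ≤ φ^[n+1] C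
      rw [Function.iterate_succ_apply']
      exact hnn _ ih
  have hadec : ∀ n, a (n+1) ≤ a n := by
    intro n
    show φ^[n+1] C ≤ φ^[n] C
    rw [Function.iterate_succ_apply']
    exact hle _ (hannn n)
  have hanti : Antitone a := antitone_nat_of_succ_le hadec
  have hbb : BddBelow (Set.range a) := ⟨0, by rintro _ ⟨n, rfl⟩; exact hannn n⟩
  have hLlim : Tendsto a atTop (𝓝 (⨅ n, a n)) := tendsto_atTop_ciInf hanti hbb
  set L := ⨅ n, a n with hLdef
  have hL0 : 0 ≤ L := le_ciInf fun n => hannn n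
  have hLle : ∀ n, L ≤ a n := fun n => ciInf_le hbb n
  have hφL : φ L = L := by
    have h1 : Tendsto a atTop (𝓝[Set.Ici L] L) :=
      tendsto_nhdsWithin_iff.mpr ⟨hLlim, Filter.Eventually.of_forall hLle⟩
    have h2 : Tendsto (fun n => φ (a n)) atTop (𝓝 (φ L)) := (hrc L hL0).tendsto.comp h1
    have h3 : Tendsto (fun n => a (n+1)) atTop (𝓝 L) := hLlim.comp (tendsto_add_atTop_nat 1)
    have h4 : (fun n => φ (a n)) = fun n => a (n+1) := by
      funext n; exact (Function.iterate_succ_apply' φ n C).symm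
    rw [h4] at h2
    exact tendsto_nhds_unique h2 h3
  have hLzero : L = 0 := by
    by_contra h
    have : 0 < L := lt_of_le_of_ne hL0 (Ne.symm h)
    exact absurd hφL (ne_of_lt (hlt L this))
  have haz : Tendsto a atTop (𝓝 0) := hLzero ▸ hLlim
  have key : ∀ (n : ℕ) (x y : X), dist (f^[n] x) (f^[n] y) ≤ a n := by
    intro n
    induction n with
    | zero => intro x y; exact hCb x y
    | succ n ih =>
      intro x y
      have : a (n+1) = φ (a n) := Function.iterate_succ_apply' φ n C
      rw [this, Function.iterate_succ_apply', Function.iterate_succ_apply']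
      exact (hf _ _).trans (hmono dist_nonneg (hannn n) (ih x y))
  obtain ⟨x⟩ := ‹Nonempty X›
  have hcauchy : CauchySeq (fun n => f^[n] x) := by
    apply cauchySeq_of_le_tendsto_0 a _ haz
    intro n m N hn hm
    have e1 : f^[n] x = f^[N] (f^[n-N] x) := by
      rw [← Function.iterate_add_apply, Nat.add_sub_cancel' hn]
    have e2 : f^[m] x = f^[N] (f^[m-N] x) := by
      rw [← Function.iterate_add_apply, Nat.add_sub_cancel' hm]
    rw [e1, e2]; exact key N _ _
  obtain ⟨x₀, hx₀⟩ := cauchySeq_tendsto_of_complete hcauchy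
  have hdist0 : Tendsto (fun n => dist (f^[n] x) x₀) atTop (𝓝 0) :=
    tendsto_iff_dist_tendsto_zero.mp hx₀
  have hfix : f x₀ = x₀ := by
    have h1 : Tendsto (fun n => f^[n+1] x) atTop (𝓝 x₀) := hx₀.comp (tendsto_add_atTop_nat 1)
    have h2 : Tendsto (fun n => f^[n+1] x) atTop (𝓝 (f x₀)) := by
      rw [tendsto_iff_dist_tendsto_zero]
      apply squeeze_zero (fun n => dist_nonneg) (fun n => ?_) hdist0
      rw [Function.iterate_succ_apply']
      exact (hf _ _).trans (hle _ dist_nonneg)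
    exact tendsto_nhds_unique h2 h1
  refine ⟨x₀, hfix, ?_, ?_⟩
  · intro y hy
    by_contra h
    have hd : 0 < dist y x₀ := dist_pos.mpr h
    have : dist y x₀ ≤ φ (dist y x₀) := by
      calc dist y x₀ = dist (f y) (f x₀) := by rw [hy, hfix]
        _ ≤ φ (dist y x₀) := hf _ _
    exact absurd this (not_le.mpr (hlt _ hd))
  · intro z
    rw [tendsto_iff_dist_tendsto_zero]
    apply squeeze_zero (fun n => dist_nonneg) (fun n => ?_) haz
    calc dist (f^[n] z) x₀ = dist (f^[n] z) (f^[n] x₀) := by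
          rw [Function.iterate_fixed hfix n]
      _ ≤ a n := key n z x₀
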